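/- Let aᵢⱼ ≥ 0 (1 ≤ i ≠ j ≤ N) be weights of a strongly connected weighted digraph with Laplacian matrix L, let r ∈ ℝ^N be a positive vector with rᵀL = 0, R = diag(r₁, …, r_N), and L̂ := RL + LᵀR. Let λ₂(L̂) denote the smallest positive eigenvalue of the symmetric positive semidefinite matrix L̂. Then for every vector χ ∈ ℝ^N with all entries positive and every x ∈ ℝ^N with x ≠ 0 and χᵀx = 0, one has xᵀL̂x / xᵀx > λ₂(L̂)/N. -/

import Mathlib

open Matrix

lemma aux_spectral_bound {N : ℕ} (A : Matrix (Fin N) (Fin N) ℝ) (hA : A.IsHermitian)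
    (hPSD : ∀ z : Fin N → ℝ, 0 ≤ z ⬝ᵥ A.mulVec z)
    (hker : ∀ v : Fin N → ℝ, A.mulVec v = 0 → ∀ i j, v i = v j)
    (lam2 : ℝ)
    (hlam_min : ∀ ν : ℝ, 0 < ν →
      (∃ x : Fin N → ℝ, x ≠ 0 ∧ A.mulVec x = ν • x) → lam2 ≤ ν)
    (y : Fin N → ℝ) (hy : ∑ i, y i = 0) :
    lam2 * (y ⬝ᵥ y) ≤ y ⬝ᵥ A.mulVec y := by
  classical
  set B := hA.eigenvectorBasis with hB
  set eig := hA.eigenvalues with heigdef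
  let y' : EuclideanSpace ℝ (Fin N) := WithLp.toLp 2 y
  set V : Fin N → (Fin N → ℝ) := fun j => ⇑(B j) with hVdef
  have hV : ∀ j i, V j i = B j i := fun _ _ => rfl
  set c : Fin N → ℝ := fun j => B.repr y' j with hcdef
  have hc : ∀ j, c j = ∑ i, V j i * y i := by
    intro j
    have h := B.repr_apply_apply y' j
    have h2 : (inner ℝ (B j) y' : ℝ) = ∑ i, V j i * y i := by
      simp only [PiLp.inner_apply, RCLike.inner_apply, starRingEnd_apply, star_trivial]
      exact Finset.sum_congr rfl fun i _ => mul_comm _ _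
    show B.repr y' j = _
    rw [h, h2]
  have hrep : y = ∑ j, c j • V j := by
    have h : (∑ j, c j • B j : EuclideanSpace ℝ (Fin N)) = y' := B.sum_repr y'
    funext i
    have h2 : y i = (∑ j, c j • B j : EuclideanSpace ℝ (Fin N)) i :=
      congrFun (congrArg WithLp.ofLp h.symm) i
    rw [h2, WithLp.ofLp_sum, Finset.sum_apply, Finset.sum_apply]
    exact Finset.sum_congr rfl fun j _ => rfl
  have horth : ∀ j k : Fin N, (∑ i, V j i * V k i) = if j = k then (1:ℝ) else 0 := by
    intro j k
    have h := orthonormal_iff_ite.mp B.orthonormal j k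
    have h2 : (inner ℝ (B j) (B k) : ℝ) = ∑ i, V j i * V k i := by
      simp only [PiLp.inner_apply, RCLike.inner_apply, starRingEnd_apply, star_trivial]
      exact Finset.sum_congr rfl fun i _ => mul_comm _ _
    rw [← h2, h]
  have hAe : ∀ j, A.mulVec (V j) = eig j • V j := fun j => hA.mulVec_eigenvectorBasis j
  have hydot : ∀ j, y ⬝ᵥ V j = c j := by
    intro j
    rw [hc j, dotProduct]
    exact Finset.sum_congr rfl fun i _ => mul_comm _ _
  have dsum : ∀ (f : Fin N → Fin N → ℝ), y ⬝ᵥ (∑ j, f j) = ∑ j, y ⬝ᵥ f j := by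
    intro f
    simp only [dotProduct, Finset.sum_apply, Finset.mul_sum]
    exact Finset.sum_comm
  have hAy : A.mulVec y = ∑ j, (c j * eig j) • V j := by
    rw [hrep, ← Matrix.mulVecLin_apply, map_sum]
    refine Finset.sum_congr rfl fun j _ => ?_
    rw [LinearMap.map_smul, Matrix.mulVecLin_apply, hAe j, smul_smul]
  have hyAy : y ⬝ᵥ A.mulVec y = ∑ j, eig j * c j ^ 2 := by
    rw [hAy, dsum]
    refine Finset.sum_congr rfl fun j _ => ?_
    rw [dotProduct_smul, hydot j, smul_eq_mul]
    ring
  have hyy : y ⬝ᵥ y = ∑ j, c j ^ 2 := by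
    nth_rewrite 2 [hrep]
    rw [dsum]
    refine Finset.sum_congr rfl fun j _ => ?_
    rw [dotProduct_smul, hydot j, smul_eq_mul]
    ring
  have hVdotV : ∀ j, V j ⬝ᵥ V j = 1 := by
    intro j
    rw [dotProduct, horth j j]
    simp
  have heignn : ∀ j, 0 ≤ eig j := by
    intro j
    have h0 := hPSD (V j)
    rw [hAe j, dotProduct_smul, hVdotV j, smul_eq_mul, mul_one] at h0
    exact h0
  have hBne : ∀ j, V j ≠ (0 : Fin N → ℝ) := by
    intro j h
    have h1 := hVdotV j
    rw [h] at h1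
    simp [dotProduct] at h1
  have hterm : ∀ j, lam2 * c j ^ 2 ≤ eig j * c j ^ 2 := by
    intro j
    rcases eq_or_lt_of_le (heignn j) with h0 | hpos
    · have hker0 : A.mulVec (V j) = 0 := by rw [hAe j, ← h0, zero_smul]
      have hconst := hker _ hker0
      have hcz : c j = 0 := by
        rw [hc j]
        calc ∑ i, V j i * y i = ∑ i, V j j * y i :=
              Finset.sum_congr rfl fun i _ => by rw [hconst i j]
          _ = V j j * ∑ i, y i := by rw [Finset.mul_sum]
          _ = 0 := by rw [hy, mul_zero]
      rw [hcz]; simp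
    · have hle := hlam_min (eig j) hpos ⟨V j, hBne j, hAe j⟩
      exact mul_le_mul_of_nonneg_right hle (sq_nonneg _)
  calc lam2 * (y ⬝ᵥ y) = ∑ j, lam2 * c j ^ 2 := by rw [hyy, Finset.mul_sum]
    _ ≤ ∑ j, eig j * c j ^ 2 := Finset.sum_le_sum fun j _ => hterm j
    _ = y ⬝ᵥ A.mulVec y := hyAy.symm

/-- For a strongly connected weighted digraph with Laplacian `L`,
positive left null vector `r`, `R = diag r`, `L̂ = RL + LᵀR`, and `λ₂` the
smallest positive eigenvalue of `L̂`: for every positive vector `χ` and every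
nonzero `x` with `χᵀx = 0`, one has `xᵀL̂x / xᵀx > λ₂/N`. -/
theorem rayleigh_quotient_lower_bound_strongly_connected
    (N : ℕ) (hN : 1 ≤ N)
    (a : Fin N → Fin N → ℝ)
    (ha : ∀ i j, i ≠ j → 0 ≤ a i j)
    (hsc : ∀ i j : Fin N, Relation.ReflTransGen (fun u v : Fin N => 0 < a v u) i j)
    (L : Matrix (Fin N) (Fin N) ℝ)
    (hLdiag : ∀ i, L i i = ∑ j ∈ Finset.univ.erase i, a i j)
    (hLoff : ∀ i j, i ≠ j → L i j = -(a i j))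
    (r : Fin N → ℝ) (hr : ∀ i, 0 < r i)
    (hrL : Matrix.vecMul r L = 0)
    (Lhat : Matrix (Fin N) (Fin N) ℝ)
    (hLhat : Lhat = Matrix.diagonal r * L + Lᵀ * Matrix.diagonal r)
    (lam2 : ℝ) (hlam_pos : 0 < lam2)
    (hlam_eig : ∃ x : Fin N → ℝ, x ≠ 0 ∧ Lhat.mulVec x = lam2 • x)
    (hlam_min : ∀ ν : ℝ, 0 < ν →
      (∃ x : Fin N → ℝ, x ≠ 0 ∧ Lhat.mulVec x = ν • x) → lam2 ≤ ν) :
    ∀ χ : Fin N → ℝ, (∀ i, 0 < χ i) →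
      ∀ x : Fin N → ℝ, x ≠ 0 → χ ⬝ᵥ x = 0 →
        lam2 / N < (x ⬝ᵥ Lhat.mulVec x) / (x ⬝ᵥ x) := by
  classical
  intro χ hχ x hxne hχx
  set b : Fin N → Fin N → ℝ := fun i j => if i = j then 0 else r i * a i j with hbdef
  have hbnn : ∀ i j, 0 ≤ b i j := by
    intro i j
    rw [hbdef]
    by_cases h : i = j
    · simp [h]
    · simp only [h, if_false]
      exact mul_nonneg (hr i).le (ha i j h)
  have hbd : ∀ i, b i i = 0 := by intro i; simp [hbdef]
  have hboff : ∀ i j, i ≠ j → b i j = r i * a i j := by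
    intro i j h; simp [hbdef, h]
  have hrow : ∀ i, r i * L i i = ∑ j, b i j := by
    intro i
    rw [← Finset.sum_erase Finset.univ (hbd i)]
    rw [hLdiag i, Finset.mul_sum]
    exact Finset.sum_congr rfl fun j hj => (hboff i j (Finset.ne_of_mem_erase hj).symm).symm
  have hcol : ∀ j, r j * L j j = ∑ i, b i j := by
    intro j
    have h0 : ∑ i, r i * L i j = 0 := by
      have := congrFun hrL j
      simpa [Matrix.vecMul, dotProduct] using this
    have h1 : ∑ i, b i j = ∑ i ∈ Finset.univ.erase j, b i j :=
      (Finset.sum_erase (f := fun i => b i j) Finset.univ (hbd j)).symm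
    have h2 : ∑ i ∈ Finset.univ.erase j, b i j = -∑ i ∈ Finset.univ.erase j, r i * L i j := by
      rw [← Finset.sum_neg_distrib]
      refine Finset.sum_congr rfl fun i hi => ?_
      have hij : i ≠ j := Finset.ne_of_mem_erase hi
      rw [hboff i j hij, hLoff i j hij]
      ring
    have h3 : ∑ i ∈ Finset.univ.erase j, r i * L i j
        = (∑ i, r i * L i j) - r j * L j j :=
      Finset.sum_erase_eq_sub (Finset.mem_univ j)
    rw [h1, h2, h3, h0]
    ring
  have hentryL : ∀ i j, r i * L i j = (if i = j then ∑ k, b i k else 0) - b i j := by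
    intro i j
    by_cases h : i = j
    · subst h
      rw [if_pos rfl, hbd i, sub_zero, hrow i]
    · rw [if_neg h, hLoff i j h, hboff i j h]
      ring
  have key : ∀ z : Fin N → ℝ, z ⬝ᵥ Lhat.mulVec z = ∑ i, ∑ j, b i j * (z i - z j) ^ 2 := by
    intro z
    have hdot : z ⬝ᵥ Lhat.mulVec z = 2 * ∑ i, ∑ j, (r i * L i j) * (z i * z j) := by
      rw [hLhat]
      simp only [dotProduct, Matrix.mulVec, Matrix.add_apply, Matrix.diagonal_mul,
        Matrix.mul_diagonal, Matrix.transpose_apply, dotProduct]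
      have hswap : ∑ i, ∑ j, (L j i * r j) * (z i * z j)
          = ∑ i, ∑ j, (r i * L i j) * (z i * z j) := by
        rw [Finset.sum_comm]
        refine Finset.sum_congr rfl fun i _ => Finset.sum_congr rfl fun j _ => by ring
      calc ∑ i, z i * ∑ j, (r i * L i j + L j i * r j) * z j
          = ∑ i, ∑ j, ((r i * L i j) * (z i * z j) + (L j i * r j) * (z i * z j)) := by
            refine Finset.sum_congr rfl fun i _ => ?_
            rw [Finset.mul_sum]
            exact Finset.sum_congr rfl fun j _ => by ring
        _ = (∑ i, ∑ j, (r i * L i j) * (z i * z j))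
            + ∑ i, ∑ j, (L j i * r j) * (z i * z j) := by
            rw [← Finset.sum_add_distrib]
            exact Finset.sum_congr rfl fun i _ => Finset.sum_add_distrib
        _ = 2 * ∑ i, ∑ j, (r i * L i j) * (z i * z j) := by rw [hswap]; ring
    have hS2 : ∑ i, ∑ j, b i j * z j ^ 2 = ∑ i, ∑ j, b i j * z i ^ 2 := by
      rw [Finset.sum_comm]
      calc ∑ j, ∑ i, b i j * z j ^ 2
          = ∑ j, (∑ i, b i j) * z j ^ 2 := by
            exact Finset.sum_congr rfl fun j _ => (Finset.sum_mul _ _ _).symm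
        _ = ∑ j, (r j * L j j) * z j ^ 2 := by
            exact Finset.sum_congr rfl fun j _ => by rw [← hcol j]
        _ = ∑ j, (∑ k, b j k) * z j ^ 2 := by
            exact Finset.sum_congr rfl fun j _ => by rw [hrow j]
        _ = ∑ i, ∑ j, b i j * z i ^ 2 := by
            exact Finset.sum_congr rfl fun i _ => Finset.sum_mul _ _ _
    have hmain : ∑ i, ∑ j, (r i * L i j) * (z i * z j)
        = (∑ i, ∑ j, b i j * z i ^ 2) - ∑ i, ∑ j, b i j * (z i * z j) := by
      rw [← Finset.sum_sub_distrib]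
      refine Finset.sum_congr rfl fun i _ => ?_
      rw [← Finset.sum_sub_distrib]
      calc ∑ j, (r i * L i j) * (z i * z j)
          = ∑ j, ((if i = j then ∑ k, b i k else 0) * (z i * z j)
              - b i j * (z i * z j)) := by
            refine Finset.sum_congr rfl fun j _ => ?_
            rw [hentryL i j]; ring
        _ = (∑ j, (if i = j then (∑ k, b i k) * (z i * z j) else 0))
            - ∑ j, b i j * (z i * z j) := by
            rw [← Finset.sum_sub_distrib]
            refine Finset.sum_congr rfl fun j _ => ?_
            by_cases h : i = j <;> simp [h]
        _ = (∑ k, b i k) * (z i * z i) - ∑ j, b i j * (z i * z j) := by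
            rw [Finset.sum_ite_eq Finset.univ i (fun j => (∑ k, b i k) * (z i * z j))]
            simp
        _ = ∑ j, (b i j * z i ^ 2 - b i j * (z i * z j)) := by
            rw [Finset.sum_sub_distrib, Finset.sum_mul]
            congr 1
            exact Finset.sum_congr rfl fun j _ => by ring
    have hRHS : ∑ i, ∑ j, b i j * (z i - z j) ^ 2
        = (∑ i, ∑ j, b i j * z i ^ 2) + (∑ i, ∑ j, b i j * z j ^ 2)
          - 2 * ∑ i, ∑ j, b i j * (z i * z j) := by
      have : ∀ i j : Fin N, b i j * (z i - z j) ^ 2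
          = b i j * z i ^ 2 + b i j * z j ^ 2 - 2 * (b i j * (z i * z j)) := by
        intro i j; ring
      simp_rw [this]
      simp only [Finset.sum_add_distrib, Finset.sum_sub_distrib, ← Finset.mul_sum]
    rw [hdot, hRHS, hS2, hmain]
    ring
  have hPSD : ∀ z : Fin N → ℝ, 0 ≤ z ⬝ᵥ Lhat.mulVec z := by
    intro z
    rw [key z]
    exact Finset.sum_nonneg fun i _ =>
      Finset.sum_nonneg fun j _ => mul_nonneg (hbnn i j) (sq_nonneg _)
  have hsym : Lhat.IsHermitian := by
    have hentry : ∀ i j, Lhat i j = r i * L i j + L j i * r j := by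
      intro i j
      rw [hLhat]
      simp [Matrix.add_apply, Matrix.diagonal_mul, Matrix.mul_diagonal,
        Matrix.transpose_apply]
    show Lhatᴴ = Lhat
    ext i j
    rw [Matrix.conjTranspose_apply, hentry, hentry]
    simp only [star_trivial]
    ring
  have hker : ∀ v : Fin N → ℝ, Lhat.mulVec v = 0 → ∀ i j, v i = v j := by
    intro v hv
    have h0 : ∑ i, ∑ j, b i j * (v i - v j) ^ 2 = 0 := by
      rw [← key v, hv, dotProduct_zero]
    have h1 := (Finset.sum_eq_zero_iff_of_nonneg (fun i _ =>
      Finset.sum_nonneg fun j _ => mul_nonneg (hbnn i j) (sq_nonneg _))).mp h0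
    have hterm : ∀ i j : Fin N, b i j * (v i - v j) ^ 2 = 0 := by
      intro i j
      have h2 := (Finset.sum_eq_zero_iff_of_nonneg (fun j _ =>
        mul_nonneg (hbnn i j) (sq_nonneg _))).mp (h1 i (Finset.mem_univ i))
      exact h2 j (Finset.mem_univ j)
    have step : ∀ u w : Fin N, 0 < a w u → v w = v u := by
      intro u w hw
      by_cases h : w = u
      · rw [h]
      · have hb : 0 < b w u := by
          rw [hboff w u h]
          exact mul_pos (hr w) hw
        have h3 := hterm w u
        have h4 : (v w - v u) ^ 2 = 0 := by
          rcases mul_eq_zero.mp h3 with h' | h'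
          · exact absurd h' hb.ne'
          · exact h'
        have h5 : v w - v u = 0 := by
          have := sq_eq_zero_iff.mp h4
          exact this
        linarith
    intro i j
    have h := hsc i j
    induction h with
    | refl => rfl
    | tail hab hrel ih => exact ih.trans (step _ _ hrel).symm
  -- handle N = 1
  rcases eq_or_lt_of_le hN with hN1 | hN2'
  · exfalso
    apply hxne
    funext i
    have hcard : N = 1 := hN1.symm
    subst hcard
    have : χ 0 * x 0 = 0 := by simpa [dotProduct] using hχx
    have hx0 : x 0 = 0 := by
      rcases mul_eq_zero.mp this with h | h
      · exact absurd h (hχ 0).ne'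
      · exact h
    have : i = 0 := Subsingleton.elim i 0
    simp [this, hx0]
  have hN2 : 2 ≤ N := hN2'
  have hNpos : 0 < (N : ℝ) := by positivity
  have hNne : (N : ℝ) ≠ 0 := hNpos.ne'
  set s := ∑ i, χ i with hsdef
  have hs : 0 < s := Finset.sum_pos (fun i _ => hχ i) ⟨⟨0, by omega⟩, Finset.mem_univ _⟩
  set cc := (∑ i, x i) / N with hccdef
  set y : Fin N → ℝ := fun i => x i - cc with hydef
  have hcardN : (Finset.univ : Finset (Fin N)).card = N := by simp
  have hysum : ∑ i, y i = 0 := by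
    rw [hydef]
    rw [Finset.sum_sub_distrib, Finset.sum_const, hcardN, hccdef]
    rw [nsmul_eq_mul]
    field_simp
    ring
  have hxLx : x ⬝ᵥ Lhat.mulVec x = y ⬝ᵥ Lhat.mulVec y := by
    rw [key x, key y]
    refine Finset.sum_congr rfl fun i _ => Finset.sum_congr rfl fun j _ => ?_
    rw [hydef]
    ring_nf
  have hyne : y ≠ 0 := by
    intro h
    have hx_const : ∀ i, x i = cc := by
      intro i
      have := congrFun h i
      simp [hydef] at this
      linarith
    have : χ ⬝ᵥ x = cc * s := by
      rw [dotProduct, hsdef, Finset.mul_sum]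
      exact Finset.sum_congr rfl fun i _ => by rw [hx_const i]; ring
    rw [hχx] at this
    have hcc0 : cc = 0 := by
      rcases mul_eq_zero.mp this.symm with h' | h'
      · exact h'
      · exact absurd h' hs.ne'
    apply hxne
    funext i
    rw [hx_const i, hcc0]
    rfl
  have hyynn : 0 ≤ y ⬝ᵥ y := Finset.sum_nonneg fun i _ => mul_self_nonneg _
  have hyy : 0 < y ⬝ᵥ y :=
    lt_of_le_of_ne hyynn fun h => hyne (dotProduct_self_eq_zero.mp h.symm)
  -- Cauchy-Schwarz with scaled vector w i = N * χ i - s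
  set w : Fin N → ℝ := fun i => (N : ℝ) * χ i - s with hwdef
  have hwy : ∑ i, w i * y i = (N : ℝ) * (χ ⬝ᵥ y) := by
    rw [dotProduct, Finset.mul_sum]
    have : ∑ i, w i * y i = ∑ i, ((N : ℝ) * (χ i * y i) - s * y i) := by
      refine Finset.sum_congr rfl fun i _ => by rw [hwdef]; ring
    rw [this, Finset.sum_sub_distrib, ← Finset.mul_sum, ← Finset.mul_sum, hysum]
    ring
  have hww : ∑ i, w i ^ 2 = (N : ℝ) ^ 2 * (χ ⬝ᵥ χ) - (N : ℝ) * s ^ 2 := by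
    have : ∀ i, w i ^ 2 = (N : ℝ) ^ 2 * (χ i * χ i) - 2 * (N : ℝ) * s * χ i + s ^ 2 := by
      intro i; rw [hwdef]; ring
    simp_rw [this]
    rw [Finset.sum_add_distrib, Finset.sum_sub_distrib, Finset.sum_const, hcardN,
      ← Finset.mul_sum, ← Finset.mul_sum, ← hsdef, dotProduct]
    ring
  have hχχ : χ ⬝ᵥ χ < s ^ 2 := by
    have hexp : s ^ 2 = ∑ i, ∑ j, χ i * χ j := by
      rw [hsdef, sq, Finset.sum_mul_sum]
    have hsplit : ∀ i : Fin N, ∑ j, χ i * χ j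
        = χ i * χ i + ∑ j ∈ Finset.univ.erase i, χ i * χ j := by
      intro i
      exact (Finset.add_sum_erase Finset.univ (fun j => χ i * χ j) (Finset.mem_univ i)).symm
    have hpos : 0 < ∑ i, ∑ j ∈ Finset.univ.erase i, χ i * χ j := by
      refine Finset.sum_pos (fun i _ => ?_) ⟨⟨0, by omega⟩, Finset.mem_univ _⟩
      refine Finset.sum_pos (fun j hj => mul_pos (hχ i) (hχ j)) ?_
      have h01 : (⟨0, by omega⟩ : Fin N) ≠ (⟨1, by omega⟩ : Fin N) :=
        Fin.ne_of_val_ne (by norm_num)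
      by_cases h : i = ⟨0, by omega⟩
      · exact ⟨⟨1, by omega⟩, Finset.mem_erase.mpr ⟨by rw [h]; exact h01.symm, Finset.mem_univ _⟩⟩
      · exact ⟨⟨0, by omega⟩, Finset.mem_erase.mpr ⟨fun hc => h hc.symm, Finset.mem_univ _⟩⟩
    have : s ^ 2 = (χ ⬝ᵥ χ) + ∑ i, ∑ j ∈ Finset.univ.erase i, χ i * χ j := by
      rw [hexp]
      simp_rw [hsplit]
      rw [Finset.sum_add_distrib, dotProduct]
    linarith
  have hCS : (∑ i, w i * y i) ^ 2 ≤ (∑ i, w i ^ 2) * ∑ i, y i ^ 2 :=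
    Finset.sum_mul_sq_le_sq_mul_sq Finset.univ w y
  have hyysq : ∑ i, y i ^ 2 = y ⬝ᵥ y := by
    rw [dotProduct]; exact Finset.sum_congr rfl fun i _ => sq (y i) ▸ rfl
  have hccs : cc * s = -(χ ⬝ᵥ y) := by
    have hh : χ ⬝ᵥ x = χ ⬝ᵥ y + cc * s := by
      rw [dotProduct, dotProduct, hsdef, Finset.mul_sum, ← Finset.sum_add_distrib]
      refine Finset.sum_congr rfl fun i _ => ?_
      rw [hydef]
      ring
    rw [hχx] at hh
    linarith
  -- N * cc^2 < (N - 1) * (y ⬝ᵥ y)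
  have hkey2 : (N : ℝ) * cc ^ 2 < ((N : ℝ) - 1) * (y ⬝ᵥ y) := by
    have h1 : ((N : ℝ) * (χ ⬝ᵥ y)) ^ 2 ≤ ((N : ℝ) ^ 2 * (χ ⬝ᵥ χ) - (N : ℝ) * s ^ 2) * (y ⬝ᵥ y) := by
      rw [← hwy, ← hww, ← hyysq]
      exact hCS
    have h2 : (N : ℝ) ^ 2 * (χ ⬝ᵥ χ) - (N : ℝ) * s ^ 2
        < (N:ℝ) * ((N:ℝ) - 1) * s ^ 2 := by
      have := mul_lt_mul_of_pos_left hχχ (by positivity : (0:ℝ) < (N:ℝ)^2)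
      nlinarith
    have h3 : ((N : ℝ) * (cc * s)) ^ 2 < (N:ℝ) * ((N:ℝ) - 1) * s ^ 2 * (y ⬝ᵥ y) := by
      rw [hccs]
      calc ((N : ℝ) * -(χ ⬝ᵥ y)) ^ 2 = ((N : ℝ) * (χ ⬝ᵥ y)) ^ 2 := by ring
        _ ≤ ((N : ℝ) ^ 2 * (χ ⬝ᵥ χ) - (N : ℝ) * s ^ 2) * (y ⬝ᵥ y) := h1
        _ < (N:ℝ) * ((N:ℝ) - 1) * s ^ 2 * (y ⬝ᵥ y) := by
            exact mul_lt_mul_of_pos_right h2 hyy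
    have hs2 : 0 < s ^ 2 := by positivity
    have h4 : (N:ℝ) * s ^ 2 * ((N:ℝ) * cc ^ 2) < (N:ℝ) * s ^ 2 * (((N:ℝ) - 1) * (y ⬝ᵥ y)) := by
      calc (N:ℝ) * s ^ 2 * ((N:ℝ) * cc ^ 2) = ((N : ℝ) * (cc * s)) ^ 2 := by ring
        _ < (N:ℝ) * ((N:ℝ) - 1) * s ^ 2 * (y ⬝ᵥ y) := h3
        _ = (N:ℝ) * s ^ 2 * (((N:ℝ) - 1) * (y ⬝ᵥ y)) := by ring
    exact lt_of_mul_lt_mul_left h4 (by positivity : (0:ℝ) ≤ (N:ℝ) * s ^ 2)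
  have hxx : x ⬝ᵥ x = y ⬝ᵥ y + (N : ℝ) * cc ^ 2 := by
    rw [dotProduct, dotProduct]
    have : ∀ i, x i * x i = y i * y i + 2 * cc * y i + cc ^ 2 := by
      intro i; rw [hydef]; ring
    simp_rw [this]
    rw [Finset.sum_add_distrib, Finset.sum_add_distrib, Finset.sum_const, hcardN,
      ← Finset.mul_sum, hysum]
    push_cast
    ring
  have hxxpos : 0 < x ⬝ᵥ x := by
    rw [hxx]
    have : 0 ≤ (N:ℝ) * cc ^ 2 := by positivity
    linarith
  have hxxlt : x ⬝ᵥ x < (N : ℝ) * (y ⬝ᵥ y) := by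
    rw [hxx]
    nlinarith [hkey2, hyy]
  have hspec := aux_spectral_bound Lhat hsym hPSD hker lam2 hlam_min y hysum
  rw [div_lt_div_iff₀ hNpos hxxpos]
  calc lam2 * (x ⬝ᵥ x) < lam2 * ((N:ℝ) * (y ⬝ᵥ y)) := by
        exact mul_lt_mul_of_pos_left hxxlt hlam_pos
    _ = (lam2 * (y ⬝ᵥ y)) * (N:ℝ) := by ring
    _ ≤ (y ⬝ᵥ Lhat.mulVec y) * (N:ℝ) := mul_le_mul_of_nonneg_right hspec hNpos.le
    _ = (x ⬝ᵥ Lhat.mulVec x) * (N:ℝ) := by rw [hxLx]
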